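/- arXiv:2408.17398 — 2 statements merged into one kernel-verified Lean document; each statement's English description precedes it below -/
import Mathlib

section
/- Suppose V(μ,·) is single-peaked with peak l̂_V(μ), U(μ,·) is single-peaked with peak l̂_U(μ), both peaks are continuous and increasing in μ, and l̂_V(μ) < l̂_U(μ) for interior μ. If a learning process stops providing information at some interior belief μ̄ at level s with s ≥ l̂_U(μ̄), then there exists ε > 0 and a belief μ* + ε > μ̄ such that splitting μ̄ into the mixture of posteriors 0 and μ*+ε (with the Bayes-plausible weights p₀·0 + (1−p₀)(μ*+ε) = μ̄) strictly decreases the principal's expected payoff: V(μ̄, s) > p₀·V(0,s) + (1−p₀)·V(μ*+ε, l̂_U(μ*+ε)), using linearity of V(·,s) in μ and single-peakedness of V(μ*+ε, ·) with l̂_V(μ*+ε) < s < l̂_U(μ*+ε). -/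
/-- The splitting step of Lemma A.1.  Binary state, `V(μ,l) = μ v1(l) +
(1−μ) v0(l)` affine in the belief; `l̂_U` (the agent's peak) is continuous and strictly
increasing, `l̂_V` (the principal's peak) is continuous, and `V(μ,·)` is strictly
decreasing past its peak `l̂_V(μ)`.  If a learning process stops providing information at
an interior belief `μbar` at level `s ≥ l̂_U(μbar)`, with `μ* = max{μ : l̂_U(μ) = s}` (so
`μbar ≤ μ*`, `l̂_U(μ*) = s`, and `l̂_V(μ*) < s`), then there exists `ε > 0` with
`l̂_V(μ*+ε) < s < l̂_U(μ*+ε)` such that splitting `μbar` into the Bayes-plausible mixture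
`p0·0 + (1−p0)(μ*+ε) = μbar` strictly decreases the principal's payoff:
`V(μbar, s) > p0·V(0,s) + (1−p0)·V(μ*+ε, l̂_U(μ*+ε))`. -/
theorem stmt11 (v0 v1 : ℝ → ℝ) (V : ℝ → ℝ → ℝ)
    (hV : ∀ μ l, V μ l = μ * v1 l + (1 - μ) * v0 l)
    (lU lV : ℝ → ℝ) (hUc : Continuous lU) (hVc : Continuous lV)
    (hUm : StrictMono lU)
    (hpeak : ∀ μ, StrictAntiOn (fun l => V μ l) (Set.Ici (lV μ)))
    (μbar μstar s : ℝ) (hμbar0 : 0 < μbar) (hμle : μbar ≤ μstar) (hμ1 : μstar < 1)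
    (hgap : lV μstar < lU μstar) (hs : lU μstar = s) :
    ∃ ε > 0, μstar + ε < 1 ∧ lV (μstar + ε) < s ∧ s < lU (μstar + ε) ∧
      ∀ p0 : ℝ, 0 ≤ p0 → p0 < 1 → (1 - p0) * (μstar + ε) = μbar →
        V μbar s > p0 * V 0 s + (1 - p0) * V (μstar + ε) (lU (μstar + ε)) := by
  have hgs : lV μstar < s := hs ▸ hgap
  have hev : ∀ᶠ x in nhds μstar, lV x < s :=
    (hVc.continuousAt (x := μstar)).eventually_lt continuousAt_const hgs
  rw [Metric.eventually_nhds_iff] at hev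
  obtain ⟨δ, hδ, hball⟩ := hev
  set ε := min (δ / 2) ((1 - μstar) / 2) with hε
  have hε0 : 0 < ε := lt_min (by linarith) (by linarith)
  have hεδ : ε < δ := lt_of_le_of_lt (min_le_left _ _) (by linarith)
  have hε1 : μstar + ε < 1 := by
    have := min_le_right (δ / 2) ((1 - μstar) / 2)
    have : ε ≤ (1 - μstar) / 2 := this
    linarith
  refine ⟨ε, hε0, hε1, ?_, ?_, ?_⟩
  · apply hball
    simp [Real.dist_eq, abs_of_nonneg hε0.le, hεδ]
  · rw [← hs]; exact hUm (by linarith)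
  · intro p0 hp0 hp1 hmix
    have hlVlt : lV (μstar + ε) < s := by
      apply hball; simp [Real.dist_eq, abs_of_nonneg hε0.le, hεδ]
    have hslt : s < lU (μstar + ε) := by rw [← hs]; exact hUm (by linarith)
    have hanti := hpeak (μstar + ε) (Set.mem_Ici.2 hlVlt.le)
      (Set.mem_Ici.2 (le_of_lt (hlVlt.trans hslt))) hslt
    -- hanti : V (μ*+ε) (lU (μ*+ε)) < V (μ*+ε) s
    have h1p : 0 < 1 - p0 := by linarith
    have key : V μbar s = p0 * V 0 s + (1 - p0) * V (μstar + ε) s := by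
      rw [hV, hV, hV, ← hmix]; ring
    rw [key]
    have := mul_lt_mul_of_pos_left hanti h1p
    linarith
end

section
/- Consider the discrete-time sup-inf problem: sup over mechanisms φ : {0,...,N} → ℝ ∪ {+∞} of inf over all finite belief martingales (μ_t)_{t=0}^N (with values in Δ({0,1}) and μ at t=0 equal to prior μ₀) of E[V(μ_τ, τ) + φ(τ)], where τ is the agent's optimal stopping time for E[U(μ_τ, τ) − φ(τ)] subject to participation E[U(μ_τ,τ) − φ(τ)] ≥ U(μ₀,0) (else τ = 0 and payoffs are V(μ₀,0), U(μ₀,0)). Then the value of this problem equals max_{t ∈ {0,...,N}} [U(μ₀,t) − U(μ₀,0) + V(μ₀,t)], and it is attained by the hard-quota mechanism φ(t) = λ* for t ≤ T* and +∞ for t > T*, where T* attains the max and λ* = U(μ₀,T*) − U(μ₀,0). -/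
open scoped Classical

noncomputable section

/-- A finite belief martingale on horizon `{0,…,N}` with prior `μ0 ∈ [0,1]` (binary state:
`bel t ω` is the probability of state `θ = 1`), on a finite sample space `Fin n`, adapted
to its own filtration: conditional on the belief path up to time `t`, the expectation of
`bel (t+1)` is `bel t`. -/
structure FinBeliefMart (N : ℕ) (μ0 : ℝ) where
  n : ℕ
  npos : 0 < n
  P : Fin n → ℝ
  Pnn : ∀ ω, 0 ≤ P ω
  Psum : ∑ ω, P ω = 1
  bel : ℕ → Fin n → ℝ
  mem : ∀ t ω, bel t ω ∈ Set.Icc (0:ℝ) 1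
  init : ∀ ω, bel 0 ω = μ0
  mart : ∀ t ω,
    (∑ ω', if (∀ s ≤ t, bel s ω' = bel s ω) then P ω' * bel (t + 1) ω' else 0)
      = bel t ω * (∑ ω', if (∀ s ≤ t, bel s ω' = bel s ω) then P ω' else 0)

/-- Expected payoff `U(μ,t) = μ u(1,t) + (1−μ) u(0,t)` at belief `μ`. -/
def EU (u : Bool → ℕ → ℝ) (μ : ℝ) (t : ℕ) : ℝ := μ * u true t + (1 - μ) * u false t

/-- A stopping time adapted to the filtration generated by the belief path. -/
def IsAdapted {N : ℕ} {μ0 : ℝ} (M : FinBeliefMart N μ0) (τ : Fin M.n → ℕ) : Prop :=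
  ∀ ω ω', (∀ s ≤ τ ω, M.bel s ω' = M.bel s ω) → τ ω' = τ ω

/-- Feasibility for mechanism with allowed stopping set `A` (`t ∉ A` encodes `φ(t) = +∞`). -/
def Feasible {N : ℕ} {μ0 : ℝ} (M : FinBeliefMart N μ0) (A : Set ℕ) (τ : Fin M.n → ℕ) : Prop :=
  IsAdapted M τ ∧ ∀ ω, τ ω ≤ N ∧ τ ω ∈ A

/-- Agent's expected payoff under transfer `φ`. -/
def agentPay (u : Bool → ℕ → ℝ) {N : ℕ} {μ0 : ℝ} (M : FinBeliefMart N μ0)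
    (φ : ℕ → ℝ) (τ : Fin M.n → ℕ) : ℝ :=
  ∑ ω, M.P ω * (EU u (M.bel (τ ω) ω) (τ ω) - φ (τ ω))

/-- Principal's expected payoff under transfer `φ`. -/
def prinPay (v : Bool → ℕ → ℝ) {N : ℕ} {μ0 : ℝ} (M : FinBeliefMart N μ0)
    (φ : ℕ → ℝ) (τ : Fin M.n → ℕ) : ℝ :=
  ∑ ω, M.P ω * (EU v (M.bel (τ ω) ω) (τ ω) + φ (τ ω))

/-- Agent best response: a feasible optimal stopping time, breaking ties toward larger
stopping times (it pointwise dominates every other optimum). -/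
def AgentBR (u : Bool → ℕ → ℝ) {N : ℕ} {μ0 : ℝ} (M : FinBeliefMart N μ0)
    (φ : ℕ → ℝ) (A : Set ℕ) (τ : Fin M.n → ℕ) : Prop :=
  Feasible M A τ ∧
    (∀ τ', Feasible M A τ' → agentPay u M φ τ' ≤ agentPay u M φ τ) ∧
    (∀ τ', Feasible M A τ' → agentPay u M φ τ' = agentPay u M φ τ → ∀ ω, τ' ω ≤ τ ω)

/-- The principal's realized payoff `x` under mechanism `(φ, A)` and learning process `M`:
if the agent's optimal value clears the participation threshold `U(μ0,0)` she plays a best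
response; otherwise she does not participate and payoffs are `V(μ0,0)`, `U(μ0,0)`. -/
def Outcome (u v : Bool → ℕ → ℝ) (N : ℕ) (μ0 : ℝ) (φ : ℕ → ℝ) (A : Set ℕ)
    (M : FinBeliefMart N μ0) (x : ℝ) : Prop :=
  (∃ τ, AgentBR u M φ A τ ∧ agentPay u M φ τ ≥ EU u μ0 0 ∧ x = prinPay v M φ τ) ∨
  ((∀ τ, Feasible M A τ → agentPay u M φ τ < EU u μ0 0) ∧ x = EU v μ0 0)

namespace Stmt14Aux

variable {N : ℕ} {μ0 : ℝ} {M : FinBeliefMart N μ0}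

/-- per-atom one-step martingale in difference form -/
lemma atom_step (k : ℕ) (ω : Fin M.n) :
    (∑ ω', if (∀ s ≤ k, M.bel s ω' = M.bel s ω) then
        M.P ω' * (M.bel (k + 1) ω' - M.bel k ω') else 0) = 0 := by
  have h1 : (∑ ω', if (∀ s ≤ k, M.bel s ω' = M.bel s ω) then
        M.P ω' * (M.bel (k + 1) ω' - M.bel k ω') else 0)
      = (∑ ω', if (∀ s ≤ k, M.bel s ω' = M.bel s ω) then M.P ω' * M.bel (k + 1) ω' else 0)
        - (∑ ω', if (∀ s ≤ k, M.bel s ω' = M.bel s ω) then M.P ω' * M.bel k ω' else 0) := by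
    rw [← Finset.sum_sub_distrib]
    refine Finset.sum_congr rfl fun ω' _ => ?_
    split_ifs <;> ring
  have h2 : (∑ ω', if (∀ s ≤ k, M.bel s ω' = M.bel s ω) then M.P ω' * M.bel k ω' else 0)
      = M.bel k ω * (∑ ω', if (∀ s ≤ k, M.bel s ω' = M.bel s ω) then M.P ω' else 0) := by
    rw [Finset.mul_sum]
    refine Finset.sum_congr rfl fun ω' _ => ?_
    split_ifs with h
    · rw [h k le_rfl]; ring
    · ring
  rw [h1, h2, M.mart k ω]
  ring

/-- path signature up to time k -/
def pathk (M : FinBeliefMart N μ0) (k : ℕ) (ω : Fin M.n) : ℕ → ℝ :=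
  fun s => if s ≤ k then M.bel s ω else 0

lemma pathk_eq_iff {k : ℕ} {ω ω' : Fin M.n} :
    pathk M k ω' = pathk M k ω ↔ (∀ s ≤ k, M.bel s ω' = M.bel s ω) := by
  constructor
  · intro h s hs
    have := congrFun h s
    simpa [pathk, hs] using this
  · intro h
    funext s
    by_cases hs : s ≤ k
    · simp [pathk, hs, h s hs]
    · simp [pathk, hs]

/-- one-step martingale over a time-k measurable event S -/
lemma stepA (k : ℕ) (S : Fin M.n → Prop) [DecidablePred S]
    (hS : ∀ ω ω', (∀ s ≤ k, M.bel s ω' = M.bel s ω) → (S ω ↔ S ω')) :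
    (∑ ω, if S ω then M.P ω * M.bel (k + 1) ω else 0)
      = (∑ ω, if S ω then M.P ω * M.bel k ω else 0) := by
  have key : (∑ ω, if S ω then M.P ω * (M.bel (k + 1) ω - M.bel k ω) else 0) = 0 := by
    have hfib := Finset.sum_fiberwise_of_maps_to
      (s := (Finset.univ : Finset (Fin M.n)))
      (t := Finset.univ.image (pathk M k))
      (g := pathk M k)
      (fun x _ => Finset.mem_image_of_mem _ (Finset.mem_univ x))
      (fun ω => if S ω then M.P ω * (M.bel (k + 1) ω - M.bel k ω) else 0)
    rw [← hfib]
    refine Finset.sum_eq_zero fun y hy => ?_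
    obtain ⟨ω0, -, hω0⟩ := Finset.mem_image.mp hy
    have hmem : ∀ ω' : Fin M.n, pathk M k ω' = y ↔ (∀ s ≤ k, M.bel s ω' = M.bel s ω0) := by
      intro ω'; rw [← hω0]; exact pathk_eq_iff
    rw [Finset.sum_filter]
    by_cases hs : S ω0
    · have he : (∑ ω', if pathk M k ω' = y then
          (if S ω' then M.P ω' * (M.bel (k + 1) ω' - M.bel k ω') else 0) else 0)
          = ∑ ω', if (∀ s ≤ k, M.bel s ω' = M.bel s ω0) then
              M.P ω' * (M.bel (k + 1) ω' - M.bel k ω') else 0 := by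
        refine Finset.sum_congr rfl fun ω' _ => ?_
        by_cases ha : ∀ s ≤ k, M.bel s ω' = M.bel s ω0
        · rw [if_pos ((hmem ω').mpr ha), if_pos ((hS ω0 ω' ha).mp hs), if_pos ha]
        · rw [if_neg (fun h => ha ((hmem ω').mp h)), if_neg ha]
      rw [he, atom_step]
    · refine Finset.sum_eq_zero fun ω' _ => ?_
      by_cases h : pathk M k ω' = y
      · rw [if_pos h, if_neg (fun hs' => hs ((hS ω0 ω' ((hmem ω').mp h)).mpr hs'))]
      · rw [if_neg h]
  have expand : (∑ ω, if S ω then M.P ω * (M.bel (k + 1) ω - M.bel k ω) else 0)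
      = (∑ ω, if S ω then M.P ω * M.bel (k + 1) ω else 0)
        - (∑ ω, if S ω then M.P ω * M.bel k ω else 0) := by
    rw [← Finset.sum_sub_distrib]
    refine Finset.sum_congr rfl fun ω _ => ?_
    split_ifs <;> ring
  have := expand.symm.trans key
  linarith

/-- multi-step atom-conditional martingale -/
lemma atomCond {k t : ℕ} (hkt : k ≤ t) (ω0 : Fin M.n) :
    (∑ ω', if (∀ s ≤ k, M.bel s ω' = M.bel s ω0) then M.P ω' * M.bel t ω' else 0)
      = M.bel k ω0 * (∑ ω', if (∀ s ≤ k, M.bel s ω' = M.bel s ω0) then M.P ω' else 0) := by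
  induction t, hkt using Nat.le_induction with
  | base =>
    rw [Finset.mul_sum]
    refine Finset.sum_congr rfl fun ω' _ => ?_
    split_ifs with h
    · rw [h k le_rfl]; ring
    · ring
  | succ t hkt ih =>
    rw [← ih]
    have h := stepA (M := M) t (fun ω' => ∀ s ≤ k, M.bel s ω' = M.bel s ω0)
      (fun ω ω' h => ⟨fun h2 s hs => (h s (hs.trans hkt)).trans (h2 s hs),
        fun h2 s hs => ((h s (hs.trans hkt)).symm).trans (h2 s hs)⟩)
    exact h

lemma adapted_event {τ : Fin M.n → ℕ} (hτ : IsAdapted M τ) (k : ℕ)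
    {ω ω' : Fin M.n} (h : ∀ s ≤ k, M.bel s ω' = M.bel s ω) : (k < τ ω ↔ k < τ ω') := by
  constructor
  · intro hk
    by_contra hk'
    push_neg at hk'
    have := hτ ω' ω (fun s hs => (h s (hs.trans hk')).symm)
    omega
  · intro hk
    by_contra hk'
    push_neg at hk'
    have := hτ ω ω' (fun s hs => h s (hs.trans hk'))
    omega

/-- optional stopping -/
lemma optStop {τ : Fin M.n → ℕ} (hτ : IsAdapted M τ) (hτN : ∀ ω, τ ω ≤ N) :
    (∑ ω, M.P ω * M.bel (τ ω) ω) = μ0 := by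
  have main : ∀ k, (∑ ω, M.P ω * M.bel (min (τ ω) k) ω) = μ0 := by
    intro k
    induction k with
    | zero =>
      simp only [Nat.min_zero, M.init]
      rw [← Finset.sum_mul, M.Psum, one_mul]
    | succ k ih =>
      have split1 : (∑ ω, M.P ω * M.bel (min (τ ω) (k+1)) ω)
          = (∑ ω, if k < τ ω then M.P ω * M.bel (k+1) ω else 0)
            + (∑ ω, if k < τ ω then 0 else M.P ω * M.bel (min (τ ω) k) ω) := by
        rw [← Finset.sum_add_distrib]
        refine Finset.sum_congr rfl fun ω _ => ?_
        by_cases h : k < τ ω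
        · rw [if_pos h, if_pos h]
          have hm : min (τ ω) (k+1) = k + 1 := by omega
          rw [hm]; ring
        · rw [if_neg h, if_neg h]
          have hm : min (τ ω) (k+1) = min (τ ω) k := by omega
          rw [hm]; ring
      have split2 : (∑ ω, M.P ω * M.bel (min (τ ω) k) ω)
          = (∑ ω, if k < τ ω then M.P ω * M.bel k ω else 0)
            + (∑ ω, if k < τ ω then 0 else M.P ω * M.bel (min (τ ω) k) ω) := by
        rw [← Finset.sum_add_distrib]
        refine Finset.sum_congr rfl fun ω _ => ?_
        by_cases h : k < τ ω
        · rw [if_pos h, if_pos h]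
          have hm : min (τ ω) k = k := by omega
          rw [hm]; ring
        · rw [if_neg h, if_neg h]; ring
      have hstep : (∑ ω, if k < τ ω then M.P ω * M.bel (k+1) ω else 0)
          = (∑ ω, if k < τ ω then M.P ω * M.bel k ω else 0) :=
        stepA k (fun ω => k < τ ω) (fun ω ω' h => adapted_event hτ k h)
      calc (∑ ω, M.P ω * M.bel (min (τ ω) (k+1)) ω)
          = (∑ ω, M.P ω * M.bel (min (τ ω) k) ω) := by rw [split1, split2, hstep]
        _ = μ0 := ih
  have heq : (∑ ω, M.P ω * M.bel (τ ω) ω) = (∑ ω, M.P ω * M.bel (min (τ ω) N) ω) :=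
    Finset.sum_congr rfl fun ω _ => by rw [min_eq_left (hτN ω)]
  rw [heq]; exact main N

/-- atom-conditional expectation of a future payoff -/
lemma atomCondEU (w : Bool → ℕ → ℝ) {k t : ℕ} (hkt : k ≤ t) (ω0 : Fin M.n) :
    (∑ ω', if (∀ s ≤ k, M.bel s ω' = M.bel s ω0) then M.P ω' * EU w (M.bel t ω') t else 0)
      = EU w (M.bel k ω0) t
          * (∑ ω', if (∀ s ≤ k, M.bel s ω' = M.bel s ω0) then M.P ω' else 0) := by
  have e1 : (∑ ω', if (∀ s ≤ k, M.bel s ω' = M.bel s ω0) then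
        M.P ω' * EU w (M.bel t ω') t else 0)
      = (w true t - w false t) * (∑ ω', if (∀ s ≤ k, M.bel s ω' = M.bel s ω0) then
          M.P ω' * M.bel t ω' else 0)
        + w false t * (∑ ω', if (∀ s ≤ k, M.bel s ω' = M.bel s ω0) then M.P ω' else 0) := by
    rw [Finset.mul_sum, Finset.mul_sum, ← Finset.sum_add_distrib]
    refine Finset.sum_congr rfl fun ω' _ => ?_
    split_ifs
    · show M.P ω' * EU w (M.bel t ω') t = _
      simp only [EU]; ring
    · ring
  rw [e1, atomCond hkt ω0]
  simp only [EU]; ring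

/-- expectation of a fixed-date payoff at the stopped belief -/
lemma sum_EU_const (w : Bool → ℕ → ℝ) (t : ℕ) {τ : Fin M.n → ℕ}
    (hτ : IsAdapted M τ) (hτN : ∀ ω, τ ω ≤ N) :
    (∑ ω, M.P ω * EU w (M.bel (τ ω) ω) t) = EU w μ0 t := by
  have e1 : (∑ ω, M.P ω * EU w (M.bel (τ ω) ω) t)
      = (w true t - w false t) * (∑ ω, M.P ω * M.bel (τ ω) ω)
        + w false t * (∑ ω, M.P ω) := by
    rw [Finset.mul_sum, Finset.mul_sum, ← Finset.sum_add_distrib]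
    refine Finset.sum_congr rfl fun ω _ => ?_
    simp only [EU]; ring
  rw [e1, optStop hτ hτN, M.Psum]
  simp only [EU]; ring

lemma agentPay_const (u : Bool → ℕ → ℝ) (c : ℝ) (τ : Fin M.n → ℕ) :
    agentPay u M (fun _ => c) τ
      = (∑ ω, M.P ω * EU u (M.bel (τ ω) ω) (τ ω)) - c := by
  unfold agentPay
  have e : ∀ ω : Fin M.n, M.P ω * (EU u (M.bel (τ ω) ω) (τ ω) - c)
      = M.P ω * EU u (M.bel (τ ω) ω) (τ ω) - c * M.P ω := fun ω => by ring
  rw [Finset.sum_congr rfl (fun ω _ => e ω), Finset.sum_sub_distrib, ← Finset.mul_sum,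
    M.Psum, mul_one]

lemma prinPay_const (v : Bool → ℕ → ℝ) (c : ℝ) (τ : Fin M.n → ℕ) :
    prinPay v M (fun _ => c) τ
      = (∑ ω, M.P ω * EU v (M.bel (τ ω) ω) (τ ω)) + c := by
  unfold prinPay
  have e : ∀ ω : Fin M.n, M.P ω * (EU v (M.bel (τ ω) ω) (τ ω) + c)
      = M.P ω * EU v (M.bel (τ ω) ω) (τ ω) + c * M.P ω := fun ω => by ring
  rw [Finset.sum_congr rfl (fun ω _ => e ω), Finset.sum_add_distrib, ← Finset.mul_sum,
    M.Psum, mul_one]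

/-- the constant (no-learning) belief martingale -/
def constMart (N : ℕ) (μ0 : ℝ) (hμ0 : μ0 ∈ Set.Icc (0:ℝ) 1) : FinBeliefMart N μ0 where
  n := 1
  npos := one_pos
  P := fun _ => 1
  Pnn := fun _ => zero_le_one
  Psum := by simp
  bel := fun _ _ => μ0
  mem := fun _ _ => hμ0
  init := fun _ => rfl
  mart := fun t ω => by
    rw [Finset.mul_sum]
    refine Finset.sum_congr rfl fun ω' _ => ?_
    split_ifs <;> ring

variable {hμ0 : μ0 ∈ Set.Icc (0:ℝ) 1}

instance : Subsingleton (Fin (constMart N μ0 hμ0).n) :=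
  (inferInstance : Subsingleton (Fin 1))

lemma constMart_agentPay (u : Bool → ℕ → ℝ) (φ : ℕ → ℝ)
    (τ : Fin (constMart N μ0 hμ0).n → ℕ) (ω0 : Fin (constMart N μ0 hμ0).n) :
    agentPay u (constMart N μ0 hμ0) φ τ = EU u μ0 (τ ω0) - φ (τ ω0) := by
  unfold agentPay
  have e : ∀ ω : Fin (constMart N μ0 hμ0).n,
      (constMart N μ0 hμ0).P ω
        * (EU u ((constMart N μ0 hμ0).bel (τ ω) ω) (τ ω) - φ (τ ω))
      = (constMart N μ0 hμ0).P ω * (EU u μ0 (τ ω0) - φ (τ ω0)) := by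
    intro ω
    rw [Subsingleton.elim ω ω0]
    rfl
  rw [Finset.sum_congr rfl (fun ω _ => e ω), ← Finset.sum_mul,
    (constMart N μ0 hμ0).Psum, one_mul]

lemma constMart_prinPay (v : Bool → ℕ → ℝ) (φ : ℕ → ℝ)
    (τ : Fin (constMart N μ0 hμ0).n → ℕ) (ω0 : Fin (constMart N μ0 hμ0).n) :
    prinPay v (constMart N μ0 hμ0) φ τ = EU v μ0 (τ ω0) + φ (τ ω0) := by
  unfold prinPay
  have e : ∀ ω : Fin (constMart N μ0 hμ0).n,
      (constMart N μ0 hμ0).P ω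
        * (EU v ((constMart N μ0 hμ0).bel (τ ω) ω) (τ ω) + φ (τ ω))
      = (constMart N μ0 hμ0).P ω * (EU v μ0 (τ ω0) + φ (τ ω0)) := by
    intro ω
    rw [Subsingleton.elim ω ω0]
    rfl
  rw [Finset.sum_congr rfl (fun ω _ => e ω), ← Finset.sum_mul,
    (constMart N μ0 hμ0).Psum, one_mul]

end Stmt14Aux

open Stmt14Aux

/-- Discrete-time finite-horizon main theorem.  Under single-peakedness of
`U(μ,·)` and `V(μ,·)` with the principal's peak weakly earlier, the sup-inf value of the
robust regulation problem equals `max_{t ≤ N} [U(μ0,t) − U(μ0,0) + V(μ0,t)]`, and it is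
attained by the hard-quota mechanism: fixed tax `λ* = U(μ0,T*) − U(μ0,0)` for `t ≤ T*` and
`+∞` (stopping forbidden) for `t > T*`.  Part (a): the hard quota guarantees the value
against every finite belief martingale; part (b): no mechanism guarantees more. -/
theorem stmt14 (N : ℕ) (u v : Bool → ℕ → ℝ) (μ0 : ℝ) (hμ0 : μ0 ∈ Set.Icc (0:ℝ) 1)
    (hpeaks : ∀ μ ∈ Set.Icc (0:ℝ) 1, ∃ pU pV : ℕ, pV ≤ pU ∧ pU ≤ N ∧
      (∀ a b : ℕ, a ≤ b → b ≤ pU → EU u μ a ≤ EU u μ b) ∧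
      (∀ a b : ℕ, pU ≤ a → a ≤ b → b ≤ N → EU u μ b ≤ EU u μ a) ∧
      (∀ a b : ℕ, a ≤ b → b ≤ pV → EU v μ a ≤ EU v μ b) ∧
      (∀ a b : ℕ, pV ≤ a → a ≤ b → b ≤ N → EU v μ b ≤ EU v μ a))
    (Tstar : ℕ) (hT : Tstar ≤ N)
    (hTmax : ∀ t ≤ N, EU u μ0 t - EU u μ0 0 + EU v μ0 t
      ≤ EU u μ0 Tstar - EU u μ0 0 + EU v μ0 Tstar)
    (lamstar : ℝ) (hlam : lamstar = EU u μ0 Tstar - EU u μ0 0) :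
    (∀ (M : FinBeliefMart N μ0) (x : ℝ),
        Outcome u v N μ0 (fun _ => lamstar) {t | t ≤ Tstar} M x →
          EU u μ0 Tstar - EU u μ0 0 + EU v μ0 Tstar ≤ x) ∧
    (∀ (φ : ℕ → ℝ) (A : Set ℕ), (∃ t ∈ A, t ≤ N) →
        ∃ (M : FinBeliefMart N μ0) (x : ℝ), Outcome u v N μ0 φ A M x ∧
          x ≤ EU u μ0 Tstar - EU u μ0 0 + EU v μ0 Tstar) := by
  constructor
  · -- Part (a)
    intro M x hx
    -- the constant stopping time at Tstar
    have hfeasT : Feasible M {t | t ≤ Tstar} (fun _ => Tstar) :=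
      ⟨fun ω ω' _ => rfl, fun ω => ⟨hT, by simp⟩⟩
    have hadT : IsAdapted M (fun _ : Fin M.n => Tstar) := fun ω ω' _ => rfl
    have hpayT : agentPay u M (fun _ => lamstar) (fun _ => Tstar) = EU u μ0 0 := by
      rw [agentPay_const, sum_EU_const u Tstar hadT (fun ω => hT), hlam]; ring
    rcases hx with ⟨τ, ⟨hfeas, hopt, htie⟩, hpart, hxeq⟩ | ⟨hall, hxeq⟩
    · -- agent participates
      -- pointwise: V at the stopped time dominates V at Tstar
      have hpt : ∀ ω0 : Fin M.n,
          EU v (M.bel (τ ω0) ω0) Tstar ≤ EU v (M.bel (τ ω0) ω0) (τ ω0) := by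
        intro ω0
        have hmT : τ ω0 ≤ Tstar := (hfeas.2 ω0).2
        rcases eq_or_lt_of_le hmT with heq | hmlt
        · rw [heq]
        · -- claim C: stopping strictly before Tstar means U strictly decreases afterwards
          have claimC : ∀ t, τ ω0 < t → t ≤ Tstar →
              EU u (M.bel (τ ω0) ω0) t < EU u (M.bel (τ ω0) ω0) (τ ω0) := by
            intro t hmt htT
            set τd : Fin M.n → ℕ :=
              fun ω' => if (∀ s ≤ τ ω0, M.bel s ω' = M.bel s ω0) then t else τ ω' with hτdd
            have hτdval : ∀ ω', τd ω'
                = if (∀ s ≤ τ ω0, M.bel s ω' = M.bel s ω0) then t else τ ω' := fun _ => rfl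
            have hτagr : ∀ ω', (∀ s ≤ τ ω0, M.bel s ω' = M.bel s ω0) → τ ω' = τ ω0 :=
              fun ω' h => hfeas.1 ω0 ω' h
            have hadapt : IsAdapted M τd := by
              intro ω ω' hag
              by_cases hA : ∀ s ≤ τ ω0, M.bel s ω = M.bel s ω0
              · have hω : τd ω = t := by rw [hτdval, if_pos hA]
                have hA' : ∀ s ≤ τ ω0, M.bel s ω' = M.bel s ω0 := by
                  intro s hs
                  have hst : s ≤ τd ω := by rw [hω]; omega
                  exact (hag s hst).trans (hA s hs)
                rw [hτdval, if_pos hA', hω]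
              · have hω : τd ω = τ ω := by rw [hτdval, if_neg hA]
                have hagτ : ∀ s ≤ τ ω, M.bel s ω' = M.bel s ω := fun s hs =>
                  hag s (by rw [hω]; exact hs)
                have hτeq : τ ω' = τ ω := hfeas.1 ω ω' hagτ
                have hA' : ¬ (∀ s ≤ τ ω0, M.bel s ω' = M.bel s ω0) := by
                  intro hA'
                  have h1 : τ ω' = τ ω0 := hτagr ω' hA'
                  apply hA
                  intro s hs
                  have hsτ : s ≤ τ ω := by omega
                  exact ((hagτ s hsτ).symm).trans (hA' s hs)
                rw [hτdval, if_neg hA', hτeq, hω]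
            have hfeasd : Feasible M {t | t ≤ Tstar} τd := by
              refine ⟨hadapt, fun ω => ?_⟩
              rw [hτdval]
              split_ifs
              · exact ⟨htT.trans hT, htT⟩
              · exact hfeas.2 ω
            -- payoff difference
            have hdiff : agentPay u M (fun _ => lamstar) τd
                - agentPay u M (fun _ => lamstar) τ
                = ∑ ω', if (∀ s ≤ τ ω0, M.bel s ω' = M.bel s ω0) then
                    M.P ω' * (EU u (M.bel t ω') t
                      - EU u (M.bel (τ ω0) ω') (τ ω0)) else 0 := by
              rw [agentPay_const, agentPay_const]
              have e : (∑ ω, M.P ω * EU u (M.bel (τd ω) ω) (τd ω))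
                  - (∑ ω, M.P ω * EU u (M.bel (τ ω) ω) (τ ω))
                  = ∑ ω', (M.P ω' * EU u (M.bel (τd ω') ω') (τd ω')
                      - M.P ω' * EU u (M.bel (τ ω') ω') (τ ω')) := by
                rw [Finset.sum_sub_distrib]
              rw [show (∑ ω, M.P ω * EU u (M.bel (τd ω) ω) (τd ω)) - lamstar
                  - ((∑ ω, M.P ω * EU u (M.bel (τ ω) ω) (τ ω)) - lamstar)
                  = (∑ ω, M.P ω * EU u (M.bel (τd ω) ω) (τd ω))
                    - (∑ ω, M.P ω * EU u (M.bel (τ ω) ω) (τ ω)) from by ring, e]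
              refine Finset.sum_congr rfl fun ω' _ => ?_
              by_cases h : ∀ s ≤ τ ω0, M.bel s ω' = M.bel s ω0
              · rw [if_pos h]
                have h1 : τd ω' = t := by rw [hτdval, if_pos h]
                have h2 : τ ω' = τ ω0 := hτagr ω' h
                rw [h1, h2]; ring
              · rw [if_neg h]
                have h1 : τd ω' = τ ω' := by rw [hτdval, if_neg h]
                rw [h1]; ring
            have e2 := atomCondEU (M := M) u (le_of_lt hmt) ω0
            have e3 := atomCondEU (M := M) u (le_refl (τ ω0)) ω0
            have e4 : (∑ ω', if (∀ s ≤ τ ω0, M.bel s ω' = M.bel s ω0) then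
                M.P ω' * (EU u (M.bel t ω') t - EU u (M.bel (τ ω0) ω') (τ ω0)) else 0)
                = (∑ ω', if (∀ s ≤ τ ω0, M.bel s ω' = M.bel s ω0) then
                    M.P ω' * EU u (M.bel t ω') t else 0)
                  - (∑ ω', if (∀ s ≤ τ ω0, M.bel s ω' = M.bel s ω0) then
                      M.P ω' * EU u (M.bel (τ ω0) ω') (τ ω0) else 0) := by
              rw [← Finset.sum_sub_distrib]
              refine Finset.sum_congr rfl fun ω' _ => ?_
              split_ifs <;> ring
            have hW : (0:ℝ) ≤ ∑ ω', if (∀ s ≤ τ ω0, M.bel s ω' = M.bel s ω0) then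
                M.P ω' else 0 := by
              refine Finset.sum_nonneg fun ω' _ => ?_
              split_ifs
              · exact M.Pnn ω'
              · exact le_rfl
            by_contra hcon
            push_neg at hcon
            have hge : agentPay u M (fun _ => lamstar) τ
                ≤ agentPay u M (fun _ => lamstar) τd := by
              have hpos : 0 ≤ (EU u (M.bel (τ ω0) ω0) t - EU u (M.bel (τ ω0) ω0) (τ ω0))
                  * (∑ ω', if (∀ s ≤ τ ω0, M.bel s ω' = M.bel s ω0) then M.P ω' else 0) :=
                mul_nonneg (by linarith) hW
              nlinarith [hdiff, e2, e3, e4]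
            have hle := hopt τd hfeasd
            have heqp : agentPay u M (fun _ => lamstar) τd
                = agentPay u M (fun _ => lamstar) τ := le_antisymm hle hge
            have hdom := htie τd hfeasd heqp ω0
            have : τd ω0 = t := by
              rw [hτdval, if_pos (fun s _ => rfl)]
            omega
          obtain ⟨pU, pV, hpVU, hpUN, hUinc, hUdec, hVinc, hVdec⟩ :=
            hpeaks (M.bel (τ ω0) ω0) (M.mem (τ ω0) ω0)
          have hpVm : pV ≤ τ ω0 := by
            by_contra hc
            push_neg at hc
            have hpUm : τ ω0 < pU := lt_of_lt_of_le hc hpVU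
            have h1 : τ ω0 < min pU Tstar := lt_min hpUm hmlt
            have h3 := claimC (min pU Tstar) h1 (min_le_right _ _)
            have h4 : EU u (M.bel (τ ω0) ω0) (τ ω0)
                ≤ EU u (M.bel (τ ω0) ω0) (min pU Tstar) :=
              hUinc (τ ω0) (min pU Tstar) h1.le (min_le_left _ _)
            linarith
          exact hVdec (τ ω0) Tstar hpVm hmT hT
      -- assemble
      have hx1 : x = (∑ ω, M.P ω * EU v (M.bel (τ ω) ω) (τ ω)) + lamstar := by
        rw [hxeq, prinPay_const]
      have hx2 : (∑ ω, M.P ω * EU v (M.bel (τ ω) ω) Tstar) = EU v μ0 Tstar :=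
        sum_EU_const v Tstar hfeas.1 (fun ω => (hfeas.2 ω).1)
      have hx3 : (∑ ω, M.P ω * EU v (M.bel (τ ω) ω) Tstar)
          ≤ (∑ ω, M.P ω * EU v (M.bel (τ ω) ω) (τ ω)) :=
        Finset.sum_le_sum fun ω _ => mul_le_mul_of_nonneg_left (hpt ω) (M.Pnn ω)
      rw [hx1]
      rw [hlam]
      linarith
    · exact absurd (hall _ hfeasT) (by rw [hpayT]; exact lt_irrefl _)
  · -- Part (b)
    intro φ A hA
    obtain ⟨t0, ht0A, ht0N⟩ := hA
    refine ⟨constMart N μ0 hμ0, ?_⟩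
    have hω0 : (⟨0, (constMart N μ0 hμ0).npos⟩ : Fin (constMart N μ0 hμ0).n)
        = ⟨0, (constMart N μ0 hμ0).npos⟩ := rfl
    set ω0 : Fin (constMart N μ0 hμ0).n := ⟨0, (constMart N μ0 hμ0).npos⟩ with hω0def
    set A' : Finset ℕ := (Finset.range (N+1)).filter (fun t => t ∈ A) with hA'def
    have ht0A' : t0 ∈ A' := by
      rw [hA'def, Finset.mem_filter, Finset.mem_range]
      exact ⟨by omega, ht0A⟩
    set g : ℕ → ℝ := fun t => EU u μ0 t - φ t with hgdef
    obtain ⟨tm, htmA', htmmax⟩ := Finset.exists_max_image A' g ⟨t0, ht0A'⟩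
    set B : Finset ℕ := A'.filter (fun t => ∀ s ∈ A', g s ≤ g t) with hBdef
    have hBne : B.Nonempty := ⟨tm, Finset.mem_filter.mpr ⟨htmA', htmmax⟩⟩
    set th := B.max' hBne with hthdef
    have hthB : th ∈ B := B.max'_mem hBne
    have hthA' : th ∈ A' := (Finset.mem_filter.mp hthB).1
    have hthmax : ∀ s ∈ A', g s ≤ g th := (Finset.mem_filter.mp hthB).2
    have hthN : th ≤ N := by
      have := (Finset.mem_filter.mp hthA').1
      rw [Finset.mem_range] at this
      omega
    have hthA : th ∈ A := (Finset.mem_filter.mp hthA').2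
    have htie0 : ∀ s ∈ A', g s = g th → s ≤ th := fun s hs hgs =>
      B.le_max' s (Finset.mem_filter.mpr ⟨hs, fun r hr => (hthmax r hr).trans_eq hgs.symm⟩)
    have hfeasA' : ∀ τ : Fin (constMart N μ0 hμ0).n → ℕ,
        Feasible (constMart N μ0 hμ0) A τ → τ ω0 ∈ A' := by
      intro τ h
      rw [hA'def, Finset.mem_filter, Finset.mem_range]
      exact ⟨by have := (h.2 ω0).1; omega, (h.2 ω0).2⟩
    by_cases hpar : EU u μ0 0 ≤ g th
    · refine ⟨EU v μ0 th + φ th, Or.inl ⟨fun _ => th,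
        ⟨⟨fun ω ω' _ => rfl, fun ω => ⟨hthN, hthA⟩⟩, ?_, ?_⟩, ?_, ?_⟩, ?_⟩
      · intro τ' hfe
        rw [constMart_agentPay u φ τ' ω0, constMart_agentPay u φ (fun _ => th) ω0]
        exact hthmax _ (hfeasA' τ' hfe)
      · intro τ' hfe heq ω
        rw [constMart_agentPay u φ τ' ω0, constMart_agentPay u φ (fun _ => th) ω0] at heq
        have := htie0 _ (hfeasA' τ' hfe) heq
        rw [Subsingleton.elim ω ω0]
        exact this
      · rw [ge_iff_le, constMart_agentPay u φ (fun _ => th) ω0]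
        exact hpar
      · rw [constMart_prinPay v φ (fun _ => th) ω0]
      · have h1 : φ th ≤ EU u μ0 th - EU u μ0 0 := by
          rw [hgdef] at hpar
          simp only at hpar
          linarith
        have h2 := hTmax th hthN
        linarith
    · push_neg at hpar
      refine ⟨EU v μ0 0, Or.inr ⟨fun τ hfe => ?_, rfl⟩, ?_⟩
      · rw [constMart_agentPay u φ τ ω0]
        exact lt_of_le_of_lt (hthmax _ (hfeasA' τ hfe)) hpar
      · have := hTmax 0 (Nat.zero_le N)
        linarith

end
end
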